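/- For every integer d ≥ 3, the eigenvalues λ = λ⁺_d > 1 and μ = λ⁻_d < 1 are non-resonant: there are no nonnegative integers n, m with n + m ≥ 2 satisfying λ = λⁿμᵐ, and none satisfying μ = λⁿμᵐ. -/

import Mathlib

set_option maxHeartbeats 800000

private lemma notsq (d : ℕ) (hd : 3 ≤ d) : ¬ IsSquare (9 * d ^ 2 - 10 * d + 1) := by
  rintro ⟨t, ht⟩
  have hle : 10 * d ≤ 9 * d ^ 2 := by nlinarith
  have ht' : (t : ℤ) * t = 9 * (d:ℤ) ^ 2 - 10 * d + 1 := by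
    have := congrArg (fun n : ℕ => (n : ℤ)) ht
    push_cast [hle] at this
    linarith
  have hd' : (3:ℤ) ≤ (d:ℤ) := by exact_mod_cast hd
  have htn : (0:ℤ) ≤ (t:ℤ) := Int.natCast_nonneg t
  rcases le_or_gt (t : ℤ) (3 * d - 2) with h | h
  · nlinarith
  · nlinarith

theorem stmt12 (d : ℕ) (hd : 3 ≤ d)
    (lam mu : ℝ)
    (hlam : lam = (9 * (d : ℝ) ^ 2 - 8 * d + 1 + (3 * d - 1) * Real.sqrt (9 * d ^ 2 - 10 * d + 1)) / 2)
    (hmu : mu = (9 * (d : ℝ) ^ 2 - 8 * d + 1 - (3 * d - 1) * Real.sqrt (9 * d ^ 2 - 10 * d + 1)) / 2) :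
    (¬ ∃ n m : ℕ, 2 ≤ n + m ∧ lam = lam ^ n * mu ^ m) ∧
    (¬ ∃ n m : ℕ, 2 ≤ n + m ∧ mu = lam ^ n * mu ^ m) := by
  have hdR : (3:ℝ) ≤ (d:ℝ) := by exact_mod_cast hd
  set s : ℝ := Real.sqrt (9 * d ^ 2 - 10 * d + 1) with hs
  have hargal : (0:ℝ) ≤ 9 * (d:ℝ) ^ 2 - 10 * d + 1 := by nlinarith
  have hs2 : s ^ 2 = 9 * (d:ℝ) ^ 2 - 10 * d + 1 := Real.sq_sqrt hargal
  have hsnn : 0 ≤ s := Real.sqrt_nonneg _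
  -- bounds on s
  have hsub : s < 3 * (d:ℝ) - 1 := by nlinarith
  have hslb : 3 * (d:ℝ) - 2 < s := by nlinarith
  -- irrationality of s
  have hcast : (9 * (d:ℝ) ^ 2 - 10 * d + 1) = ((9 * d ^ 2 - 10 * d + 1 : ℕ) : ℝ) := by
    have hle : 10 * d ≤ 9 * d ^ 2 := by nlinarith
    push_cast [hle]
    ring
  have hirr : Irrational s := by
    rw [hs, hcast]
    exact irrational_sqrt_natCast_iff.mpr (notsq d hd)
  -- basic facts
  have hprod : lam * mu = (d:ℝ) ^ 2 := by rw [hlam, hmu]; nlinarith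
  have hlam1 : 1 < lam := by rw [hlam]; nlinarith
  have hlam0 : (0:ℝ) < lam := by linarith
  have hmu1 : mu < 1 := by rw [hmu]; nlinarith
  have hlamd : (d:ℝ) ^ 2 < lam := by nlinarith
  -- powers of lam are p + q*s with p,q positive rationals
  have hpow : ∀ k : ℕ, ∃ p q : ℚ, 0 < p ∧ 0 < q ∧ lam ^ (k + 1) = (p:ℝ) + (q:ℝ) * s := by
    intro k
    induction k with
    | zero =>
      refine ⟨(9 * d ^ 2 - 8 * d + 1) / 2, (3 * d - 1) / 2, by
        have : (3:ℚ) ≤ (d:ℚ) := by exact_mod_cast hd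
        nlinarith, by
        have : (3:ℚ) ≤ (d:ℚ) := by exact_mod_cast hd
        nlinarith, ?_⟩
      rw [pow_one, hlam]
      push_cast
      ring
    | succ k ih =>
      obtain ⟨p, q, hp, hq, hk⟩ := ih
      have hdQ : (3:ℚ) ≤ (d:ℚ) := by exact_mod_cast hd
      have hA : (0:ℚ) < (9 * (d:ℚ) ^ 2 - 8 * d + 1) / 2 := by nlinarith
      have hB : (0:ℚ) < (3 * (d:ℚ) - 1) / 2 := by nlinarith
      have hSq : (0:ℚ) < 9 * (d:ℚ) ^ 2 - 10 * d + 1 := by nlinarith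
      refine ⟨p * ((9 * d ^ 2 - 8 * d + 1) / 2) + q * ((3 * d - 1) / 2) * (9 * d ^ 2 - 10 * d + 1),
        p * ((3 * d - 1) / 2) + q * ((9 * d ^ 2 - 8 * d + 1) / 2),
        add_pos (mul_pos hp hA) (mul_pos (mul_pos hq hB) hSq),
        add_pos (mul_pos hp hB) (mul_pos hq hA), ?_⟩
      have : lam ^ (k + 1 + 1) = lam ^ (k + 1) * lam := by ring
      rw [this, hk, hlam]
      push_cast
      linear_combination ((q:ℝ) * ((3 * (d:ℝ) - 1) / 2)) * hs2
  -- lam^k is never a natural number for k ≥ 1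
  have hkey : ∀ k N : ℕ, lam ^ (k + 1) ≠ (N : ℝ) := by
    intro k N h
    obtain ⟨p, q, hp, hq, hk⟩ := hpow k
    have : Irrational (lam ^ (k + 1)) := by
      rw [hk]
      exact (hirr.ratCast_mul hq.ne').ratCast_add p
    rw [h] at this
    exact N.not_irrational this
  have hd2 : (9:ℝ) ≤ (d:ℝ) ^ 2 := by nlinarith
  constructor
  · rintro ⟨n, m, hnm, heq⟩
    have h1 : lam ^ (m + 1) = lam ^ n * (d:ℝ) ^ (2 * m) := by
      calc lam ^ (m + 1) = (lam ^ n * mu ^ m) * lam ^ m := by rw [← heq]; ring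
      _ = lam ^ n * (lam * mu) ^ m := by rw [mul_pow]; ring
      _ = lam ^ n * ((d:ℝ) ^ 2) ^ m := by rw [hprod]
      _ = lam ^ n * (d:ℝ) ^ (2 * m) := by rw [← pow_mul]
    rcases le_or_gt n m with hle | hlt
    · -- lam ^ (m + 1 - n) = d ^ (2m), with m ≥ 1
      have hm1 : 1 ≤ m := by omega
      have hsplit : lam ^ (m + 1) = lam ^ n * lam ^ (m + 1 - n) := by
        rw [← pow_add]; congr 1; omega
      have hcan : lam ^ (m + 1 - n) = (d:ℝ) ^ (2 * m) :=
        mul_left_cancel₀ (pow_ne_zero n hlam0.ne') (by rw [← hsplit, h1])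
      have hk1 : 1 ≤ m + 1 - n := by omega
      have : lam ^ (m + 1 - n - 1 + 1) = ((d ^ (2 * m) : ℕ) : ℝ) := by
        rw [show m + 1 - n - 1 + 1 = m + 1 - n by omega, hcan]; push_cast; ring
      exact hkey _ _ this
    · -- n ≥ m + 1 : 1 = lam^(n-m-1) * d^(2m)
      have hsplit : lam ^ n = lam ^ (m + 1) * lam ^ (n - m - 1) := by
        rw [← pow_add]; congr 1; omega
      have h2 : (1:ℝ) = lam ^ (n - m - 1) * (d:ℝ) ^ (2 * m) := by
        refine mul_left_cancel₀ (pow_ne_zero (m+1) hlam0.ne') ?_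
        rw [mul_one]
        linear_combination h1 + (d:ℝ) ^ (2 * m) * hsplit
      rcases Nat.eq_zero_or_pos m with hm0 | hm1
      · subst hm0
        have hn2 : 2 ≤ n := by omega
        have hlt1 : (1:ℝ) < lam ^ (n - 0 - 1) := one_lt_pow₀ hlam1 (by omega)
        rw [Nat.mul_zero, pow_zero, mul_one] at h2
        linarith
      · have hge : (9:ℝ) ≤ (d:ℝ) ^ (2 * m) := by
          calc (9:ℝ) ≤ (d:ℝ) ^ 2 := hd2
          _ ≤ (d:ℝ) ^ (2 * m) := pow_le_pow_right₀ (by linarith) (by omega)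
        have hge2 : (1:ℝ) ≤ lam ^ (n - m - 1) := one_le_pow₀ hlam1.le
        nlinarith
  · rintro ⟨n, m, hnm, heq⟩
    have h1 : lam ^ m * (d:ℝ) ^ 2 = lam ^ (n + 1) * (d:ℝ) ^ (2 * m) := by
      calc lam ^ m * (d:ℝ) ^ 2 = lam ^ m * (lam * mu) := by rw [hprod]
      _ = lam * lam ^ m * (lam ^ n * mu ^ m) := by linear_combination (lam * lam ^ m) * heq
      _ = lam ^ (n + 1) * (lam * mu) ^ m := by rw [mul_pow, pow_succ]; ring
      _ = lam ^ (n + 1) * ((d:ℝ) ^ 2) ^ m := by rw [hprod]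
      _ = lam ^ (n + 1) * (d:ℝ) ^ (2 * m) := by rw [← pow_mul]
    have hdpos : (0:ℝ) < (d:ℝ) := by linarith
    rcases le_or_gt m n with hle | hlt
    · -- d^2 = lam^(n+1-m) * d^(2m), RHS ≥ lam > d^2
      have hsplit : lam ^ (n + 1) = lam ^ m * lam ^ (n + 1 - m) := by
        rw [← pow_add]; congr 1; omega
      have h2 : (d:ℝ) ^ 2 = lam ^ (n + 1 - m) * (d:ℝ) ^ (2 * m) :=
        mul_left_cancel₀ (pow_ne_zero m hlam0.ne') (by rw [h1, hsplit]; ring)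
      have hg1 : lam ≤ lam ^ (n + 1 - m) := le_self_pow₀ hlam1.le (by omega)
      have hg2 : (1:ℝ) ≤ (d:ℝ) ^ (2 * m) := one_le_pow₀ (by linarith)
      nlinarith
    · -- m ≥ n + 1 : lam^(m-n-1) * d^2 = d^(2m)
      have hsplit : lam ^ m = lam ^ (n + 1) * lam ^ (m - n - 1) := by
        rw [← pow_add]; congr 1; omega
      have h2 : lam ^ (m - n - 1) * (d:ℝ) ^ 2 = (d:ℝ) ^ (2 * m) :=
        mul_left_cancel₀ (pow_ne_zero (n+1) hlam0.ne') (by rw [← mul_assoc, ← hsplit, h1])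
      rcases Nat.eq_zero_or_pos (m - n - 1) with hk0 | hk1
      · rw [hk0, pow_zero, one_mul] at h2
        have hnat : d ^ 2 = d ^ (2 * m) := by
          have : ((d ^ 2 : ℕ) : ℝ) = ((d ^ (2 * m) : ℕ) : ℝ) := by push_cast; exact h2
          exact_mod_cast this
        have := Nat.pow_right_injective (by omega : 2 ≤ d) hnat
        omega
      · -- lam^k * d^2 = d^(2m) with m = n+1+k+... ; m ≥ 2
        have hm2 : 2 ≤ m := by omega
        have hdsplit : (d:ℝ) ^ (2 * m) = (d:ℝ) ^ (2 * m - 2) * (d:ℝ) ^ 2 := by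
          rw [← pow_add]; congr 1; omega
        have h3 : lam ^ (m - n - 1) = (d:ℝ) ^ (2 * m - 2) :=
          mul_right_cancel₀ (pow_ne_zero 2 hdpos.ne') (by rw [h2, hdsplit])
        have : lam ^ (m - n - 1 - 1 + 1) = ((d ^ (2 * m - 2) : ℕ) : ℝ) := by
          rw [show m - n - 1 - 1 + 1 = m - n - 1 by omega, h3]; push_cast; ring
        exact hkey _ _ this
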